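/- For all g₁ = (a₁,b₁) and g₂ = (a₂,b₂) in ℚ* × ℚ, the adelic length of the affine product g₁g₂ = (a₁a₂, a₁b₂ + b₁) satisfies ‖g₁g₂‖ ≤ log 2 + 2‖g₁‖ + ‖g₂‖. -/

import Mathlib

open Real

/-! ### Auxiliary lemmas -/

/-- Support finset of a rational at finite places. -/
noncomputable def Spt (q : ℚ) : Finset Nat.Primes :=
  (Nat.primeFactors (q.num.natAbs * q.den)).subtype Nat.Prime

lemma padicNorm_eq_one_off (q : ℚ) (hq : q ≠ 0) (p : Nat.Primes) (hp : p ∉ Spt q) :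
    padicNorm p.1 q = 1 := by
  haveI : Fact p.1.Prime := ⟨p.2⟩
  replace hp : p.1 ∉ (q.num.natAbs * q.den).primeFactors := fun h => hp (by unfold Spt; exact Finset.mem_subtype.mpr h)
  have hne : q.num.natAbs * q.den ≠ 0 := by
    simp [Rat.num_ne_zero.mpr hq, q.den_nz, Int.natAbs_eq_zero, mul_ne_zero_iff]
  have hdvd : ¬ p.1 ∣ q.num.natAbs * q.den := fun h => hp (Nat.mem_primeFactors.mpr ⟨p.2, h, hne⟩)
  have h1 : ¬ (p.1 : ℤ) ∣ q.num := by
    rw [Int.natCast_dvd]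
    exact fun h => hdvd (h.mul_right _)
  have h2 : ¬ p.1 ∣ q.den := fun h => hdvd (h.mul_left _)
  have hv : padicValRat p.1 q = 0 := by
    rw [padicValRat, padicValInt.eq_zero_of_not_dvd h1, padicValNat.eq_zero_of_not_dvd h2]
    simp
  rw [padicNorm.eq_zpow_of_nonzero hq, hv]
  simp

lemma vanish_off (q : ℚ) (F : ℚ → ℝ) (h0 : F 0 = 0) (h1 : F 1 = 0) (p : Nat.Primes)
    (hp : p ∉ Spt q) : F (padicNorm p.1 q) = 0 := by
  by_cases hq : q = 0
  · simp [hq, padicNorm.zero, h0]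
  · rw [padicNorm_eq_one_off q hq p hp, h1]

lemma summable_F (q : ℚ) (F : ℚ → ℝ) (h0 : F 0 = 0) (h1 : F 1 = 0) :
    Summable (fun p : Nat.Primes => F (padicNorm p.1 q)) :=
  summable_of_ne_finset_zero (s := Spt q) (fun p hp => vanish_off q F h0 h1 p hp)

lemma tsum_F_eq (q : ℚ) (F : ℚ → ℝ) (h0 : F 0 = 0) (h1 : F 1 = 0) {T : Finset Nat.Primes}
    (hT : Spt q ⊆ T) :
    ∑' p : Nat.Primes, F (padicNorm p.1 q) = ∑ p ∈ T, F (padicNorm p.1 q) :=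
  tsum_eq_sum (fun p hp => vanish_off q F h0 h1 p (fun hs => hp (hT hs)))

lemma summable_log (q : ℚ) : Summable (fun p : Nat.Primes => Real.log (padicNorm p.1 q)) :=
  summable_F q (fun x => Real.log (x : ℝ)) (by simp) (by simp)

/-! ### The product formula -/

lemma pf_nat (n : ℕ) (hn : n ≠ 0) :
    ∑' p : Nat.Primes, Real.log (padicNorm p.1 (n : ℚ)) = -Real.log n := by
  induction n using Nat.recOnMul with
  | zero => exact absurd rfl hn
  | one => simp [padicNorm.one]
  | prime q hq =>
    haveI : Fact q.Prime := ⟨hq⟩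
    refine (tsum_eq_single (L := SummationFilter.unconditional _) (⟨q, hq⟩ : Nat.Primes) ?_).trans ?_
    · intro p hp
      haveI : Fact p.1.Prime := ⟨p.2⟩
      rw [padicNorm.padicNorm_of_prime_of_ne (by simpa [Subtype.ext_iff] using hp)]
      simp
    · show Real.log (padicNorm q (q:ℚ) : ℝ) = _
      rw [padicNorm.padicNorm_p_of_prime]
      push_cast
      rw [Real.log_inv]
  | mul a b iha ihb =>
    have ha : a ≠ 0 := by rintro rfl; simp at hn
    have hb : b ≠ 0 := by rintro rfl; simp at hn
    have key : ∀ p : Nat.Primes, Real.log (padicNorm p.1 ((a * b : ℕ) : ℚ)) =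
        Real.log (padicNorm p.1 (a : ℚ)) + Real.log (padicNorm p.1 (b : ℚ)) := by
      intro p
      haveI : Fact p.1.Prime := ⟨p.2⟩
      push_cast
      rw [padicNorm.mul]
      push_cast
      rw [Real.log_mul (by exact_mod_cast padicNorm.nonzero (p := p.1) (by exact_mod_cast ha))
        (by exact_mod_cast padicNorm.nonzero (p := p.1) (by exact_mod_cast hb))]
    calc ∑' p : Nat.Primes, Real.log (padicNorm p.1 ((a*b : ℕ) : ℚ))
        = ∑' p : Nat.Primes, (Real.log (padicNorm p.1 (a : ℚ)) + Real.log (padicNorm p.1 (b : ℚ))) := by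
          exact tsum_congr key
      _ = (∑' p : Nat.Primes, Real.log (padicNorm p.1 (a : ℚ))) + ∑' p : Nat.Primes, Real.log (padicNorm p.1 (b : ℚ)) := Summable.tsum_add (summable_log _) (summable_log _)
      _ = -Real.log (a*b : ℕ) := by
          rw [iha ha, ihb hb]
          push_cast
          rw [Real.log_mul (by exact_mod_cast ha) (by exact_mod_cast hb)]
          ring

lemma pf_int (z : ℤ) (hz : z ≠ 0) :
    ∑' p : Nat.Primes, Real.log (padicNorm p.1 (z : ℚ)) = -Real.log |(z : ℝ)| := by
  have h := pf_nat z.natAbs (Int.natAbs_ne_zero.mpr hz)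
  have habs : ((z.natAbs : ℕ) : ℚ) = |(z : ℚ)| := by
    push_cast [Nat.cast_natAbs]
    norm_cast
  have e : ∀ p : Nat.Primes, padicNorm p.1 ((z.natAbs : ℕ) : ℚ) = padicNorm p.1 (z : ℚ) := by
    intro p
    rw [habs]
    rcases abs_choice ((z : ℚ)) with h' | h' <;> rw [h']
    rw [padicNorm.neg]
  rw [← tsum_congr (f := fun p : Nat.Primes => Real.log (padicNorm p.1 ((z.natAbs : ℕ) : ℚ)))
    (g := fun p : Nat.Primes => Real.log (padicNorm p.1 (z : ℚ))) (fun p => by simp only [e p]), h]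
  congr 1
  rw [← Real.log_abs]
  congr 1
  rw [show ((z.natAbs : ℕ) : ℝ) = |(z : ℝ)| by push_cast [Nat.cast_natAbs]; norm_cast, abs_abs]

lemma pf_rat (q : ℚ) (hq : q ≠ 0) :
    ∑' p : Nat.Primes, Real.log (padicNorm p.1 q) = -Real.log |(q : ℝ)| := by
  have hnum : q.num ≠ 0 := Rat.num_ne_zero.mpr hq
  have hden : (q.den : ℚ) ≠ 0 := by exact_mod_cast q.den_nz
  have e : ∀ p : Nat.Primes, Real.log (padicNorm p.1 q) =
      Real.log (padicNorm p.1 (q.num : ℚ)) - Real.log (padicNorm p.1 ((q.den : ℕ) : ℚ)) := by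
    intro p
    haveI : Fact p.1.Prime := ⟨p.2⟩
    conv_lhs => rw [← Rat.num_div_den q]
    rw [padicNorm.div]
    push_cast
    rw [Real.log_div (by exact_mod_cast padicNorm.nonzero (p := p.1) (by exact_mod_cast hnum))
      (by exact_mod_cast padicNorm.nonzero (p := p.1) hden)]
  rw [tsum_congr e, Summable.tsum_sub (summable_log _) (summable_log _), pf_int _ hnum,
    pf_nat q.den q.den_nz]
  have habs : |(q : ℝ)| = |(q.num : ℝ)| / (q.den : ℝ) := by
    conv_lhs => rw [← Rat.num_div_den q]
    push_cast
    rw [abs_div, abs_of_pos (show (0:ℝ) < q.den by exact_mod_cast q.pos)]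
  rw [habs, Real.log_div (abs_ne_zero.mpr (by exact_mod_cast hnum)) (by exact_mod_cast q.den_nz),
    Real.log_abs]
  ring

lemma pf_sum (q : ℚ) (hq : q ≠ 0) {T : Finset Nat.Primes} (hT : Spt q ⊆ T) :
    ∑ p ∈ T, Real.log (padicNorm p.1 q : ℝ) = -Real.log |(q : ℝ)| :=
  (tsum_F_eq q (fun x => Real.log (x : ℝ)) (by simp) (by simp) hT).symm.trans (pf_rat q hq)

/-! ### Real `log⁺` lemmas -/

lemma lp_nonneg (x : ℝ) : 0 ≤ max (Real.log x) 0 := le_max_right _ _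

lemma lp_mul_le (x y : ℝ) (hx : 0 ≤ x) (hy : 0 ≤ y) :
    max (Real.log (x * y)) 0 ≤ max (Real.log x) 0 + max (Real.log y) 0 := by
  rcases eq_or_lt_of_le hx with h | hx
  · simp [← h]
  rcases eq_or_lt_of_le hy with h | hy
  · simp [← h]
  rw [Real.log_mul hx.ne' hy.ne']
  exact max_le (add_le_add (le_max_left _ _) (le_max_left _ _))
    (add_nonneg (lp_nonneg x) (lp_nonneg y))

lemma lp_mono {x y : ℝ} (hx : 0 ≤ x) (hxy : x ≤ y) :
    max (Real.log x) 0 ≤ max (Real.log y) 0 := by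
  rcases eq_or_lt_of_le hx with h | hx
  · simp [← h]
  exact max_le_max (Real.log_le_log hx hxy) le_rfl

lemma lp_max_le (a b : ℝ) :
    max (Real.log (max a b)) 0 ≤ max (Real.log a) 0 + max (Real.log b) 0 := by
  rcases max_choice a b with h | h <;> rw [h]
  · linarith [lp_nonneg b]
  · linarith [lp_nonneg a]

lemma lp_add_neg (a : ℝ) : max a 0 + max (-a) 0 = |a| := by
  rcases le_or_gt a 0 with h | h
  · rw [max_eq_right h, max_eq_left (by linarith), abs_of_nonpos h]; ring
  · rw [max_eq_left h.le, max_eq_right (by linarith), abs_of_pos h]; ring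

lemma lp_arch (u v : ℝ) :
    max (Real.log |u + v|) 0 ≤ Real.log 2 + max (Real.log |u|) 0 + max (Real.log |v|) 0 := by
  have h1 : |u + v| ≤ 2 * max |u| |v| := by
    calc |u + v| ≤ |u| + |v| := abs_add_le u v
      _ ≤ 2 * max |u| |v| := by
          have h1 := le_max_left |u| |v|
          have h2 := le_max_right |u| |v|
          linarith
  calc max (Real.log |u + v|) 0 ≤ max (Real.log (2 * max |u| |v|)) 0 :=
        lp_mono (abs_nonneg _) h1
    _ ≤ max (Real.log 2) 0 + max (Real.log (max |u| |v|)) 0 :=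
        lp_mul_le _ _ (by norm_num) (le_trans (abs_nonneg u) (le_max_left _ _))
    _ ≤ Real.log 2 + (max (Real.log |u|) 0 + max (Real.log |v|) 0) := by
        rw [max_eq_left (Real.log_nonneg (by norm_num))]
        exact add_le_add le_rfl (lp_max_le _ _)
    _ = _ := by ring

/-! ### The local (finite-place) inequality -/

lemma pointwise (a₁ b₁ a₂ b₂ : ℚ) (ha₁ : a₁ ≠ 0) (ha₂ : a₂ ≠ 0) (p : Nat.Primes) :
    |Real.log (padicNorm p.1 (a₁ * a₂) : ℝ)|
      + max (Real.log (padicNorm p.1 (a₁ * b₂ + b₁) : ℝ)) 0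
      + max (-(Real.log (padicNorm p.1 a₁ : ℝ))) 0
    ≤ 2 * |Real.log (padicNorm p.1 a₁ : ℝ)| + |Real.log (padicNorm p.1 a₂ : ℝ)|
      + max (Real.log (padicNorm p.1 b₁ : ℝ)) 0 + max (Real.log (padicNorm p.1 b₂ : ℝ)) 0 := by
  haveI : Fact p.1.Prime := ⟨p.2⟩
  have hx₁ : (0:ℝ) < (padicNorm p.1 a₁ : ℝ) := by
    have := lt_of_le_of_ne (padicNorm.nonneg (p := p.1) a₁) (Ne.symm (padicNorm.nonzero ha₁))
    exact_mod_cast this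
  have hx₂ : (0:ℝ) < (padicNorm p.1 a₂ : ℝ) := by
    have := lt_of_le_of_ne (padicNorm.nonneg (p := p.1) a₂) (Ne.symm (padicNorm.nonzero ha₂))
    exact_mod_cast this
  have hy₁ : (0:ℝ) ≤ (padicNorm p.1 b₁ : ℝ) := by
    exact_mod_cast padicNorm.nonneg (p := p.1) b₁
  have hy₂ : (0:ℝ) ≤ (padicNorm p.1 b₂ : ℝ) := by
    exact_mod_cast padicNorm.nonneg (p := p.1) b₂
  -- first term
  have h1 : |Real.log (padicNorm p.1 (a₁ * a₂) : ℝ)|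
      ≤ |Real.log (padicNorm p.1 a₁ : ℝ)| + |Real.log (padicNorm p.1 a₂ : ℝ)| := by
    rw [padicNorm.mul]
    push_cast
    rw [Real.log_mul hx₁.ne' hx₂.ne']
    exact abs_add_le _ _
  -- second term
  have h2 : max (Real.log (padicNorm p.1 (a₁ * b₂ + b₁) : ℝ)) 0
      ≤ max (Real.log (padicNorm p.1 a₁ : ℝ)) 0 + max (Real.log (padicNorm p.1 b₂ : ℝ)) 0
        + max (Real.log (padicNorm p.1 b₁ : ℝ)) 0 := by
    have hna : (padicNorm p.1 (a₁ * b₂ + b₁) : ℝ)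
        ≤ max ((padicNorm p.1 a₁ : ℝ) * (padicNorm p.1 b₂ : ℝ)) (padicNorm p.1 b₁ : ℝ) := by
      have := padicNorm.nonarchimedean (p := p.1) (q := a₁ * b₂) (r := b₁)
      rw [padicNorm.mul] at this
      have : ((padicNorm p.1 (a₁ * b₂ + b₁) : ℚ) : ℝ)
          ≤ ((max (padicNorm p.1 a₁ * padicNorm p.1 b₂) (padicNorm p.1 b₁) : ℚ) : ℝ) := by
        exact_mod_cast this
      simpa [Rat.cast_max] using this
    calc max (Real.log (padicNorm p.1 (a₁ * b₂ + b₁) : ℝ)) 0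
        ≤ max (Real.log (max ((padicNorm p.1 a₁ : ℝ) * (padicNorm p.1 b₂ : ℝ))
            (padicNorm p.1 b₁ : ℝ))) 0 := lp_mono (by exact_mod_cast padicNorm.nonneg _) hna
      _ ≤ max (Real.log ((padicNorm p.1 a₁ : ℝ) * (padicNorm p.1 b₂ : ℝ))) 0
            + max (Real.log (padicNorm p.1 b₁ : ℝ)) 0 := lp_max_le _ _
      _ ≤ _ := by
          have := lp_mul_le (padicNorm p.1 a₁ : ℝ) (padicNorm p.1 b₂ : ℝ) hx₁.le hy₂
          linarith
  have h3 : max (Real.log (padicNorm p.1 a₁ : ℝ)) 0 + max (-(Real.log (padicNorm p.1 a₁ : ℝ))) 0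
      = |Real.log (padicNorm p.1 a₁ : ℝ)| := lp_add_neg _
  linarith

/-! ### Definitions from the statement -/

/-- `⟨q⟩ = Σ_{p prime} |log |q|_p|` (a finite sum, expressed as a `tsum` over primes). -/
noncomputable def nad (q : ℚ) : ℝ :=
  ∑' p : Nat.Primes, |Real.log (padicNorm p.1 q : ℝ)|

/-- The height `⟨b⟩⁺ = log⁺ |b|_∞ + Σ_{p prime} log⁺ |b|_p`, where `log⁺ t = max (log t) 0`
(and `⟨0⟩⁺ = 0`, automatic from `Real.log 0 = 0`). -/
noncomputable def nadPlus (q : ℚ) : ℝ :=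
  max (Real.log |(q : ℝ)|) 0 + ∑' p : Nat.Primes, max (Real.log (padicNorm p.1 q : ℝ)) 0

/-- The adelic length `‖(a,b)‖ = ⟨a⟩ + ⟨b⟩⁺` of an affinity `(a,b) ∈ ℚ* × ℚ`. -/
noncomputable def adLength (g : ℚ × ℚ) : ℝ := nad g.1 + nadPlus g.2

lemma nad_eq_sum (q : ℚ) {T : Finset Nat.Primes} (hT : Spt q ⊆ T) :
    nad q = ∑ p ∈ T, |Real.log (padicNorm p.1 q : ℝ)| :=
  tsum_F_eq q (fun x => |Real.log (x : ℝ)|) (by simp) (by simp) hT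

lemma nadPlus_eq_sum (q : ℚ) {T : Finset Nat.Primes} (hT : Spt q ⊆ T) :
    nadPlus q = max (Real.log |(q : ℝ)|) 0
      + ∑ p ∈ T, max (Real.log (padicNorm p.1 q : ℝ)) 0 := by
  rw [nadPlus, tsum_F_eq q (fun x => max (Real.log (x : ℝ)) 0) (by simp) (by simp) hT]

/-- For `g₁ = (a₁,b₁)`, `g₂ = (a₂,b₂)` in `ℚ* × ℚ`, composed as affine
maps `g₁g₂ = (a₁a₂, a₁b₂ + b₁)`, the adelic length satisfies
`‖g₁g₂‖ ≤ log 2 + 2‖g₁‖ + ‖g₂‖`. -/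
theorem statement11 (a₁ b₁ a₂ b₂ : ℚ) (ha₁ : a₁ ≠ 0) (ha₂ : a₂ ≠ 0) :
    adLength (a₁ * a₂, a₁ * b₂ + b₁) ≤
      Real.log 2 + 2 * adLength (a₁, b₁) + adLength (a₂, b₂) := by
  classical
  set T : Finset Nat.Primes :=
    Spt a₁ ∪ Spt a₂ ∪ Spt b₁ ∪ Spt b₂ ∪ Spt (a₁ * a₂) ∪ Spt (a₁ * b₂ + b₁) with hTdef
  have hT1 : Spt a₁ ⊆ T := by intro p hp; simp only [hTdef, Finset.mem_union]; tauto
  have hT2 : Spt a₂ ⊆ T := by intro p hp; simp only [hTdef, Finset.mem_union]; tauto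
  have hT3 : Spt b₁ ⊆ T := by intro p hp; simp only [hTdef, Finset.mem_union]; tauto
  have hT4 : Spt b₂ ⊆ T := by intro p hp; simp only [hTdef, Finset.mem_union]; tauto
  have hT5 : Spt (a₁ * a₂) ⊆ T := by intro p hp; simp only [hTdef, Finset.mem_union]; tauto
  have hT6 : Spt (a₁ * b₂ + b₁) ⊆ T := by intro p hp; simp only [hTdef, Finset.mem_union]; tauto
  simp only [adLength]
  rw [nad_eq_sum _ hT5, nad_eq_sum _ hT1, nad_eq_sum _ hT2,
    nadPlus_eq_sum _ hT6, nadPlus_eq_sum _ hT3, nadPlus_eq_sum _ hT4]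
  -- the summed local inequality
  have key : (∑ p ∈ T, |Real.log (padicNorm p.1 (a₁ * a₂) : ℝ)|)
      + (∑ p ∈ T, max (Real.log (padicNorm p.1 (a₁ * b₂ + b₁) : ℝ)) 0)
      + (∑ p ∈ T, max (-(Real.log (padicNorm p.1 a₁ : ℝ))) 0)
      ≤ 2 * (∑ p ∈ T, |Real.log (padicNorm p.1 a₁ : ℝ)|)
        + (∑ p ∈ T, |Real.log (padicNorm p.1 a₂ : ℝ)|)
        + (∑ p ∈ T, max (Real.log (padicNorm p.1 b₁ : ℝ)) 0)
        + (∑ p ∈ T, max (Real.log (padicNorm p.1 b₂ : ℝ)) 0) := by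
    rw [← Finset.sum_add_distrib, ← Finset.sum_add_distrib, Finset.mul_sum,
      ← Finset.sum_add_distrib, ← Finset.sum_add_distrib, ← Finset.sum_add_distrib]
    exact Finset.sum_le_sum (fun p _ => pointwise a₁ b₁ a₂ b₂ ha₁ ha₂ p)
  -- the product-formula bound at the archimedean place
  have hpf : max (Real.log |(a₁ : ℝ)|) 0 ≤ ∑ p ∈ T, max (-(Real.log (padicNorm p.1 a₁ : ℝ))) 0 := by
    have h1 : Real.log |(a₁ : ℝ)| = ∑ p ∈ T, -(Real.log (padicNorm p.1 a₁ : ℝ)) := by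
      rw [Finset.sum_neg_distrib, pf_sum a₁ ha₁ hT1, neg_neg]
    refine max_le ?_ (Finset.sum_nonneg (fun p _ => le_max_right _ _))
    rw [h1]
    exact Finset.sum_le_sum (fun p _ => le_max_left _ _)
  -- the archimedean inequality
  have harch : max (Real.log |((a₁ * b₂ + b₁ : ℚ) : ℝ)|) 0
      ≤ Real.log 2 + max (Real.log |(a₁ : ℝ)|) 0 + max (Real.log |(b₂ : ℝ)|) 0
        + max (Real.log |(b₁ : ℝ)|) 0 := by
    have hcast : ((a₁ * b₂ + b₁ : ℚ) : ℝ) = (a₁ : ℝ) * (b₂ : ℝ) + (b₁ : ℝ) := by push_cast; ring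
    rw [hcast]
    have h1 := lp_arch ((a₁ : ℝ) * (b₂ : ℝ)) (b₁ : ℝ)
    have h2 : max (Real.log |(a₁ : ℝ) * (b₂ : ℝ)|) 0
        ≤ max (Real.log |(a₁ : ℝ)|) 0 + max (Real.log |(b₂ : ℝ)|) 0 := by
      rw [abs_mul]
      exact lp_mul_le _ _ (abs_nonneg _) (abs_nonneg _)
    linarith
  have hnn1 : 0 ≤ ∑ p ∈ T, max (Real.log (padicNorm p.1 b₁ : ℝ)) 0 :=
    Finset.sum_nonneg (fun p _ => le_max_right _ _)
  have hnn2 : 0 ≤ max (Real.log |(b₁ : ℝ)|) 0 := le_max_right _ _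
  linarith
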